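/- A near-endomorphism f : ℤ → ℤ satisfies lim_{n→∞} f(n)/n = 0 if and only if f is bounded (i.e., there exists B such that |f(n)| ≤ B for all n ∈ ℤ). -/

import Mathlib

theorem near_endo_limit_zero_iff_bounded (f : ℤ → ℤ)
    (h : ∃ C : ℤ, 0 < C ∧ ∀ a b : ℤ, |f (a + b) - f a - f b| < C) :
    Filter.Tendsto (fun n : ℕ => (f n : ℝ) / n) Filter.atTop (nhds 0) ↔
      ∃ B : ℤ, ∀ n : ℤ, |f n| ≤ B := by
  obtain ⟨C, hC, hf⟩ := h
  have hf0 : |f 0| < C := by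
    have h00 := hf 0 0
    simpa using h00
  constructor
  · intro htend
    -- key inequality: |f ((m+1) n) - (m+1) f n| ≤ m C
    have key : ∀ (m : ℕ) (n : ℤ), |f (((m : ℤ)+1) * n) - ((m : ℤ)+1) * f n| ≤ m * C := by
      intro m n
      induction m with
      | zero => simp
      | succ k ih =>
        have h1 := hf (((k : ℤ)+1) * n) n
        have heq : f (((k : ℤ)+1+1) * n) - ((k : ℤ)+1+1) * f n =
            (f (((k : ℤ)+1)*n + n) - f (((k : ℤ)+1)*n) - f n) +
            (f (((k : ℤ)+1)*n) - ((k : ℤ)+1) * f n) := by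
          have : ((k : ℤ)+1+1) * n = ((k : ℤ)+1)*n + n := by ring
          rw [this]; ring
        calc |f (((k : ℤ)+1+1) * n) - ((k : ℤ)+1+1) * f n|
            ≤ |f (((k : ℤ)+1)*n + n) - f (((k : ℤ)+1)*n) - f n| +
              |f (((k : ℤ)+1)*n) - ((k : ℤ)+1) * f n| := by rw [heq]; exact abs_add_le _ _
          _ ≤ C + k * C := add_le_add h1.le ih
          _ = ((k : ℤ)+1) * C := by ring
    -- |f n| ≤ C for positive naturals
    have main : ∀ n : ℕ, 1 ≤ n → |f n| ≤ C := by
      intro n hn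
      have hnR : (0 : ℝ) < n := by exact_mod_cast hn
      -- subsequence tendsto
      have hsub : Filter.Tendsto (fun m : ℕ => ((m+1) * n : ℕ)) Filter.atTop Filter.atTop := by
        apply Filter.tendsto_atTop_mono (fun m => ?_) Filter.tendsto_id
        calc m = m * 1 := (mul_one m).symm
        _ ≤ (m+1) * n := Nat.mul_le_mul (Nat.le_succ m) hn
      have h1 : Filter.Tendsto (fun m : ℕ => (f (((m+1) * n : ℕ)) : ℝ) / (((m+1) * n : ℕ) : ℝ))
          Filter.atTop (nhds 0) := htend.comp hsub
      have h2 : Filter.Tendsto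
          (fun m : ℕ => |(f (((m+1) * n : ℕ)) : ℝ) / (((m+1) * n : ℕ) : ℝ)| + (C : ℝ) / n)
          Filter.atTop (nhds ((C : ℝ) / n)) := by
        have := (h1.abs).add_const ((C : ℝ) / n)
        simpa using this
      have hbound : ∀ m : ℕ,
          |(f n : ℝ)| / n ≤ |(f (((m+1) * n : ℕ)) : ℝ) / (((m+1) * n : ℕ) : ℝ)| + (C : ℝ) / n := by
        intro m
        have hk := key m (n : ℤ)
        have hmn : ((((m+1) * n : ℕ)) : ℤ) = ((m : ℤ)+1) * (n : ℤ) := by push_cast; ring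
        have hmnR : (0 : ℝ) < (((m+1) * n : ℕ) : ℝ) := by
          have : 1 ≤ (m+1) * n := Nat.one_le_iff_ne_zero.mpr (by positivity)
          exact_mod_cast this
        rw [hmn]
        -- work in ℝ
        have hkR : |(f (((m : ℤ)+1) * n) : ℝ) - ((m : ℝ)+1) * (f n : ℝ)| ≤ (m : ℝ) * C := by
          exact_mod_cast hk
        have hfnR : ((m : ℝ)+1) * |(f n : ℝ)| ≤ |(f (((m : ℤ)+1) * n) : ℝ)| + (m : ℝ) * C := by
          calc ((m : ℝ)+1) * |(f n : ℝ)| = |((m : ℝ)+1) * (f n : ℝ)| := by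
                rw [abs_mul, abs_of_pos (by positivity : (0:ℝ) < (m:ℝ)+1)]
            _ ≤ |(f (((m : ℤ)+1) * n) : ℝ)| +
                |(f (((m : ℤ)+1) * n) : ℝ) - ((m : ℝ)+1) * (f n : ℝ)| := by
                have := abs_sub_abs_le_abs_sub (((m : ℝ)+1) * (f n : ℝ))
                  ((f (((m : ℤ)+1) * n) : ℝ))
                rw [abs_sub_comm] at this
                linarith
            _ ≤ |(f (((m : ℤ)+1) * n) : ℝ)| + (m : ℝ) * C := by linarith
        have hm1 : (0 : ℝ) < (m : ℝ) + 1 := by positivity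
        have hmnR' : ((((m+1) * n : ℕ)) : ℝ) = ((m : ℝ)+1) * (n : ℝ) := by push_cast; ring
        rw [hmnR', abs_div, abs_of_pos (by positivity : (0:ℝ) < ((m : ℝ)+1) * n)]
        rw [div_add_div _ _ (by positivity : (((m : ℝ)+1) * n) ≠ 0) (ne_of_gt hnR),
          div_le_div_iff₀ hnR (by positivity)]
        have hmC : (m : ℝ) * C ≤ ((m : ℝ) + 1) * C := by
          have : (0:ℝ) < C := by exact_mod_cast hC
          nlinarith
        nlinarith [mul_le_mul_of_nonneg_right hfnR (by positivity : (0:ℝ) ≤ (n:ℝ)*(n:ℝ)),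
          mul_le_mul_of_nonneg_right hmC (by positivity : (0:ℝ) ≤ (n:ℝ)*(n:ℝ)), hnR]
      have hle : |(f n : ℝ)| / n ≤ (C : ℝ) / n :=
        ge_of_tendsto h2 (Filter.Eventually.of_forall hbound)
      have hfin : |(f n : ℝ)| ≤ (C : ℝ) := by
        rwa [div_le_div_iff_of_pos_right hnR] at hle
      exact_mod_cast hfin
    refine ⟨3 * C, fun n => ?_⟩
    rcases lt_trichotomy n 0 with hneg | hzero | hpos
    · have h1 := hf n (-n)
      simp at h1
      have h2 : |f (-n)| ≤ C := by
        have : 1 ≤ (-n).toNat := by omega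
        have := main (-n).toNat this
        rwa [Int.toNat_of_nonneg (by omega)] at this
      have : |f n| ≤ |f 0| + |f (-n)| + |f 0 - f n - f (-n)| := by
        have := abs_sub_abs_le_abs_sub (f n) (f 0 - f (-n))
        have h3 := abs_sub (f 0) (f (-n))
        have h4 : |f n - (f 0 - f (-n))| = |f 0 - f n - f (-n)| := by
          rw [show f n - (f 0 - f (-n)) = -(f 0 - f n - f (-n)) by ring, abs_neg]
        calc |f n| ≤ |f 0 - f (-n)| + |f n - (f 0 - f (-n))| := by
              have := abs_add_le (f 0 - f (-n)) (f n - (f 0 - f (-n)))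
              simpa using this
          _ ≤ (|f 0| + |f (-n)|) + |f 0 - f n - f (-n)| := by
              have := abs_sub (f 0) (f (-n))
              rw [h4]
              exact add_le_add this le_rfl
          _ = |f 0| + |f (-n)| + |f 0 - f n - f (-n)| := by ring
      linarith [h1.le]
    · subst hzero; linarith
    · have : 1 ≤ n.toNat := by omega
      have := main n.toNat this
      rw [Int.toNat_of_nonneg (by omega)] at this
      linarith
  · rintro ⟨B, hB⟩
    have hB0 : 0 ≤ B := le_trans (abs_nonneg _) (hB 0)
    apply squeeze_zero_norm' (a := fun n : ℕ => (B : ℝ) / n)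
    · filter_upwards [Filter.eventually_ge_atTop 1] with n hn
      have hnR : (0 : ℝ) < n := by exact_mod_cast hn
      rw [Real.norm_eq_abs, abs_div, abs_of_pos hnR]
      have hfb : |(f n : ℝ)| ≤ (B : ℝ) := by exact_mod_cast (by simpa using hB n : |f (n : ℤ)| ≤ B)
      gcongr
    · exact tendsto_const_div_atTop_nhds_zero_nat (B : ℝ)
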